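/- Let Z and Y be real Banach spaces and let T : Z → Y be a continuous linear operator. Then the range T(Z) contains a subspace isomorphic to c₀₀ (the normed space of finitely supported real sequences with the sup norm) if and only if the closure of T(Z) in Y contains a subspace isomorphic to c₀ (the Banach space of real sequences converging to 0 with the sup norm). Here 'contains a subspace isomorphic to' means there exists a continuous linear map from the sequence space into the given set's span which is an isomorphism onto its image and whose image lies in the given set. -/

import Mathlib

open scoped ZeroAtInfty

/-- `c₀₀`: the subspace of `c₀ = C₀(ℕ, ℝ)` consisting of finitely supported real
sequences, equipped with the supremum norm (inherited from `C₀(ℕ, ℝ)`). -/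
noncomputable def cZeroZero : Submodule ℝ C₀(ℕ, ℝ) where
  carrier := {f | (Function.support (f : ℕ → ℝ)).Finite}
  add_mem' := fun hf hg => Set.Finite.subset (hf.union hg) (Function.support_add _ _)
  zero_mem' := by simp [Function.support]
  smul_mem' := fun c f hf => Set.Finite.subset hf (Function.support_const_smul_subset c _)

open Function Filter Finset Topology

namespace C00Aux

lemma _root_.Nat.cocompact_eq : Filter.cocompact ℕ = Filter.atTop := by
  rw [Filter.cocompact_eq_cofinite, Nat.cofinite_eq_atTop]

/-- The `n`-th standard basis vector of `c₀`. -/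
noncomputable def eB (n : ℕ) : C₀(ℕ, ℝ) :=
  ⟨⟨fun m => if m = n then (1 : ℝ) else 0, continuous_of_discreteTopology⟩, by
    rw [Nat.cocompact_eq]
    refine tendsto_const_nhds.congr' ?_
    filter_upwards [Filter.eventually_gt_atTop n] with m hm
    simp [Nat.ne_of_gt hm]⟩

@[simp] lemma eB_apply (n m : ℕ) : eB n m = if m = n then (1 : ℝ) else 0 := rfl

lemma eB_mem (n : ℕ) : eB n ∈ cZeroZero := by
  refine Set.Finite.subset (Set.finite_singleton n) ?_
  intro m hm
  simp only [Function.mem_support, eB_apply, ne_eq, ite_eq_right_iff, Classical.not_imp] at hm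
  simp [hm.1]

lemma apply_le_norm (f : C₀(ℕ, ℝ)) (n : ℕ) : |f n| ≤ ‖f‖ := by
  have h := BoundedContinuousFunction.norm_coe_le_norm f.toBCF n
  simpa using h

lemma norm_le_of_forall {f : C₀(ℕ, ℝ)} {M : ℝ} (hM : 0 ≤ M) (h : ∀ n, |f n| ≤ M) :
    ‖f‖ ≤ M := by
  rw [← ZeroAtInftyContinuousMap.norm_toBCF_eq_norm]
  exact (BoundedContinuousFunction.norm_le hM).mpr (by simpa using h)

lemma dense_c00 : Dense (cZeroZero : Set C₀(ℕ, ℝ)) := by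
  intro f
  rw [Metric.mem_closure_iff]
  intro ε hε
  have hf : Tendsto (⇑f) atTop (𝓝 (0 : ℝ)) := by
    have := f.zero_at_infty'
    rwa [Nat.cocompact_eq] at this
  obtain ⟨N, hN⟩ := Metric.tendsto_atTop.mp hf (ε / 2) (by linarith)
  set g : C₀(ℕ, ℝ) :=
    ⟨⟨fun m => if m ≤ N then f m else 0, continuous_of_discreteTopology⟩, by
      rw [Nat.cocompact_eq]
      refine tendsto_const_nhds.congr' ?_
      filter_upwards [Filter.eventually_gt_atTop N] with m hm
      simp [Nat.not_le.mpr hm]⟩ with hgdef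
  have hg_mem : g ∈ cZeroZero := by
    refine Set.Finite.subset (Set.finite_Iic N) ?_
    intro m hm
    simp only [Function.mem_support, hgdef, ne_eq] at hm
    by_contra hmN
    simp only [Set.mem_Iic, not_le] at hmN
    exact hm (by simp [Nat.not_le.mpr hmN])
  refine ⟨g, hg_mem, ?_⟩
  rw [dist_eq_norm]
  have hb : ‖f - g‖ ≤ ε / 2 := by
    refine norm_le_of_forall (by linarith) ?_
    intro m
    rw [ZeroAtInftyContinuousMap.sub_apply]
    by_cases hm : m ≤ N
    · have : g m = f m := by simp [hgdef, hm]
      rw [this, sub_self, abs_zero]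
      positivity
    · have : g m = 0 := by simp [hgdef, hm]
      rw [this, sub_zero]
      have := hN m (Nat.le_of_lt (Nat.not_le.mp hm))
      rw [Real.dist_eq, sub_zero] at this
      exact this.le
  linarith

lemma c0_sum_apply {ι : Type*} (s : Finset ι) (g : ι → C₀(ℕ, ℝ)) (m : ℕ) :
    (∑ i ∈ s, g i) m = ∑ i ∈ s, g i m := by
  induction s using Finset.cons_induction with
  | empty => simp
  | cons a s ha ih => simp [Finset.sum_cons, ih]

end C00Aux

open C00Aux

set_option maxHeartbeats 2000000 in
/-- For a continuous linear operator `T : Z → Y` between real Banach spaces, the range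
of `T` contains an isomorphic copy of `c₀₀` (finitely supported real sequences, sup
norm) if and only if the closure of the range of `T` contains an isomorphic copy of
`c₀`. -/
theorem c00_in_range_iff_c0_in_closure_range
    (Z Y : Type*) [NormedAddCommGroup Z] [NormedSpace ℝ Z] [CompleteSpace Z]
    [NormedAddCommGroup Y] [NormedSpace ℝ Y] [CompleteSpace Y]
    (T : Z →L[ℝ] Y) :
    (∃ J : cZeroZero →L[ℝ] Y,
        (∃ c > 0, ∀ f : cZeroZero, c * ‖f‖ ≤ ‖J f‖) ∧
        Set.range J ⊆ Set.range T) ↔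
    (∃ J : C₀(ℕ, ℝ) →L[ℝ] Y,
        (∃ c > 0, ∀ f : C₀(ℕ, ℝ), c * ‖f‖ ≤ ‖J f‖) ∧
        Set.range J ⊆ closure (Set.range T)) := by
  constructor
  · rintro ⟨J, ⟨c, hc, hlow⟩, hran⟩
    have hd : DenseRange (Subtype.val : cZeroZero → C₀(ℕ, ℝ)) := by
      rw [DenseRange, Subtype.range_coe]
      exact dense_c00
    have hui : IsUniformInducing (Subtype.val : cZeroZero → C₀(ℕ, ℝ)) :=
      isometry_subtype_coe.isUniformInducing
    have hcont : Continuous (⇑J : cZeroZero → Y) := J.cont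
    have hJu : UniformContinuous (⇑J : cZeroZero → Y) := by
      rw [Metric.uniformContinuous_iff]
      intro ε hε
      obtain ⟨δ, hδ, hcd⟩ := Metric.continuous_iff.mp hcont 0 ε hε
      refine ⟨δ, hδ, fun a b hab => ?_⟩
      have e1 : dist (a - b) (0 : cZeroZero) = dist a b := by
        rw [Subtype.dist_eq, Subtype.dist_eq]
        rw [Submodule.coe_sub, ZeroMemClass.coe_zero, dist_zero_right, dist_eq_norm]
      have h2 := hcd (a - b) (by rw [e1]; exact hab)
      have e2 : J (a - b) = J a - J b := by exact map_sub J a b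
      rw [map_zero, dist_zero_right, e2] at h2
      rw [dist_eq_norm]
      exact h2
    have cont : Continuous ((hui.isDenseInducing hd).extend ⇑J) :=
      (uniformContinuous_uniformly_extend hui hd hJu).continuous
    have heq : ∀ g : cZeroZero, (hui.isDenseInducing hd).extend ⇑J (↑g) = J g :=
      fun g => uniformly_extend_of_ind hui hd hJu g
    set h : C₀(ℕ, ℝ) →L[ℝ] Y :=
      { toFun := (hui.isDenseInducing hd).extend ⇑J
        map_add' := fun x y => by
          refine hd.induction_on₂ ?_ ?_ x y
          · exact isClosed_eq (cont.comp continuous_add)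
              ((cont.comp continuous_fst).add (cont.comp continuous_snd))
          · intro a b
            show (hui.isDenseInducing hd).extend ⇑J (↑a + ↑b)
              = (hui.isDenseInducing hd).extend ⇑J ↑a
                + (hui.isDenseInducing hd).extend ⇑J ↑b
            rw [← Submodule.coe_add, heq, heq, heq, map_add]
        map_smul' := fun k x => by
          refine hd.induction_on x ?_ ?_
          · exact isClosed_eq (cont.comp (continuous_const_smul _))
              ((continuous_const_smul _).comp cont)
          · intro a
            show (hui.isDenseInducing hd).extend ⇑J (k • ↑a)
              = k • (hui.isDenseInducing hd).extend ⇑J ↑a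
            rw [← Submodule.coe_smul, heq, heq, map_smul]
        cont := cont } with hhdef
    have happ : ∀ g : cZeroZero, h (↑g) = J g := heq
    refine ⟨h, ⟨c, hc, fun f => ?_⟩, ?_⟩
    · refine hd.induction_on f ?_ fun g => ?_
      · exact isClosed_le (continuous_const.mul continuous_norm) h.continuous.norm
      · rw [happ g]
        exact hlow g
    · rintro y ⟨f, rfl⟩
      refine hd.induction_on f ?_ fun g => ?_
      · exact isClosed_closure.preimage h.continuous
      · show h ↑g ∈ closure (Set.range ⇑T)
        rw [happ g]
        exact subset_closure (hran ⟨g, rfl⟩)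
  · rintro ⟨J, ⟨c, hc, hlow⟩, hran⟩
    -- choose approximations of `J (eB n)` inside the range of `T`
    have hchoice : ∀ n : ℕ, ∃ z : Z, ‖T z - J (eB n)‖ ≤ c * (1 / 2 : ℝ) ^ (n + 2) := by
      intro n
      have h1 : J (eB n) ∈ closure (Set.range T) := hran ⟨eB n, rfl⟩
      have hpos : (0 : ℝ) < c * (1 / 2 : ℝ) ^ (n + 2) := by positivity
      obtain ⟨y, ⟨zz, rfl⟩, hy⟩ := Metric.mem_closure_iff.mp h1 _ hpos
      refine ⟨zz, ?_⟩
      rw [← dist_eq_norm, dist_comm]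
      exact hy.le
    choose z hz using hchoice
    set d : ℕ → Y := fun n => T (z n) - J (eB n) with hddef
    have hdn : ∀ n, ‖d n‖ ≤ c * (1 / 2 : ℝ) ^ (n + 2) := hz
    -- finiteness of supports
    have hsupp : ∀ f : cZeroZero,
        (Function.support fun n => ((f : C₀(ℕ, ℝ)) n) • d n).Finite := by
      intro f
      refine Set.Finite.subset f.2 ?_
      intro n hn
      simp only [Function.mem_support, ne_eq] at hn ⊢
      intro h0
      exact hn (by rw [h0, zero_smul])
    -- the perturbation linear map
    set D : cZeroZero →ₗ[ℝ] Y :=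
      { toFun := fun f => ∑ᶠ n, ((f : C₀(ℕ, ℝ)) n) • d n
        map_add' := fun f g => by
          simp only [Submodule.coe_add, ZeroAtInftyContinuousMap.add_apply, add_smul]
          exact finsum_add_distrib (hsupp f) (hsupp g)
        map_smul' := fun a f => by
          simp only [Submodule.coe_smul, ZeroAtInftyContinuousMap.smul_apply,
            smul_eq_mul, RingHom.id_apply, mul_smul]
          exact (smul_finsum' a (hsupp f)).symm } with hDdef
    have hDval : ∀ f : cZeroZero,
        D f = ∑ n ∈ f.2.toFinset, ((f : C₀(ℕ, ℝ)) n) • d n := by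
      intro f
      refine finsum_eq_finset_sum_of_support_subset _ ?_
      intro n hn
      refine (Set.Finite.mem_toFinset _).mpr ?_
      simp only [Function.mem_support, ne_eq] at hn ⊢
      intro h0
      exact hn (by rw [h0, zero_smul])
    -- tail estimate
    have htail : ∀ s : Finset ℕ, ∑ n ∈ s, (1 / 2 : ℝ) ^ (n + 2) ≤ 1 / 2 := by
      intro s
      have hsummable : Summable (fun n : ℕ => (1 / 2 : ℝ) ^ (n + 2)) := by
        refine (summable_geometric_two.mul_right ((1 / 2 : ℝ) ^ 2)).congr fun n => ?_
        rw [← pow_add]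
      have h1 : ∑ n ∈ s, (1 / 2 : ℝ) ^ (n + 2) ≤ ∑' n : ℕ, (1 / 2 : ℝ) ^ (n + 2) :=
        Summable.sum_le_tsum s (fun n _ => by positivity) hsummable
      have h2 : ∑' n : ℕ, (1 / 2 : ℝ) ^ (n + 2) = 1 / 2 := by
        have : ∀ n : ℕ, (1 / 2 : ℝ) ^ (n + 2) = (1 / 2 : ℝ) ^ n * (1 / 2) ^ 2 := by
          intro n; rw [pow_add]
        rw [tsum_congr this, tsum_mul_right, tsum_geometric_two]
        norm_num
      linarith
    -- bound on D
    have hDb : ∀ f : cZeroZero, ‖D f‖ ≤ c / 2 * ‖f‖ := by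
      intro f
      rw [hDval f]
      have hnormf : ∀ n, |(f : C₀(ℕ, ℝ)) n| ≤ ‖f‖ := fun n => apply_le_norm _ n
      calc ‖∑ n ∈ f.2.toFinset, ((f : C₀(ℕ, ℝ)) n) • d n‖
          ≤ ∑ n ∈ f.2.toFinset, ‖((f : C₀(ℕ, ℝ)) n) • d n‖ := norm_sum_le _ _
        _ ≤ ∑ n ∈ f.2.toFinset, ‖f‖ * (c * (1 / 2 : ℝ) ^ (n + 2)) := by
            refine Finset.sum_le_sum fun n _ => ?_
            rw [norm_smul, Real.norm_eq_abs]
            exact mul_le_mul (hnormf n) (hdn n) (norm_nonneg _) (by positivity)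
        _ = ‖f‖ * c * ∑ n ∈ f.2.toFinset, (1 / 2 : ℝ) ^ (n + 2) := by
            rw [Finset.mul_sum]
            exact Finset.sum_congr rfl fun n _ => by ring
        _ ≤ ‖f‖ * c * (1 / 2) := by
            refine mul_le_mul_of_nonneg_left (htail _) ?_
            positivity
        _ = c / 2 * ‖f‖ := by ring
    have hDcont : Continuous (⇑D : cZeroZero → Y) := by
      rw [Metric.continuous_iff]
      intro b ε hε
      have hc2 : (0 : ℝ) < c / 2 + 1 := by positivity
      refine ⟨ε / (c / 2 + 1), by positivity, fun a hab => ?_⟩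
      have e1 : D a - D b = D (a - b) := by exact (map_sub D a b).symm
      have e2 : dist (D a) (D b) = ‖D (a - b)‖ := by rw [dist_eq_norm, e1]
      have e3 : ‖(a - b : cZeroZero)‖ = dist a b := by
        have e4 : ‖(a - b : cZeroZero)‖ = ‖((a : C₀(ℕ, ℝ)) - (b : C₀(ℕ, ℝ)))‖ := rfl
        rw [e4, Subtype.dist_eq, dist_eq_norm]
      calc dist (D a) (D b) = ‖D (a - b)‖ := e2
        _ ≤ c / 2 * ‖(a - b : cZeroZero)‖ := hDb _
        _ = c / 2 * dist a b := by rw [e3]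
        _ ≤ c / 2 * (ε / (c / 2 + 1)) := by
            exact mul_le_mul_of_nonneg_left hab.le (by positivity)
        _ < (c / 2 + 1) * (ε / (c / 2 + 1)) := by
            exact mul_lt_mul_of_pos_right (lt_add_one _) (by positivity)
        _ = ε := by
            rw [mul_comm, div_mul_cancel₀ ε (ne_of_gt hc2)]
    set Dc : cZeroZero →L[ℝ] Y := ⟨D, hDcont⟩ with hDcdef
    set Jc : cZeroZero →L[ℝ] Y := J.comp cZeroZero.subtypeL with hJcdef
    refine ⟨Jc + Dc, ⟨c / 2, by linarith, fun f => ?_⟩, ?_⟩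
    · have h1 : c * ‖f‖ ≤ ‖J (f : C₀(ℕ, ℝ))‖ := by
        have := hlow (f : C₀(ℕ, ℝ))
        rwa [show ‖(f : C₀(ℕ, ℝ))‖ = ‖f‖ from rfl] at this
      have h2 : ‖D f‖ ≤ c / 2 * ‖f‖ := hDb f
      have happ : (Jc + Dc) f = J (f : C₀(ℕ, ℝ)) + D f := rfl
      have h3 : ‖J (f : C₀(ℕ, ℝ))‖ ≤ ‖(Jc + Dc) f‖ + ‖D f‖ := by
        rw [happ]
        have := norm_add_le (J (f : C₀(ℕ, ℝ)) + D f) (-(D f))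
        simpa using this
      linarith
    · rintro y ⟨f, rfl⟩
      set s := f.2.toFinset with hsdef
      have hfs : (f : C₀(ℕ, ℝ)) = ∑ n ∈ s, ((f : C₀(ℕ, ℝ)) n) • eB n := by
        ext m
        rw [c0_sum_apply]
        have : ∀ n ∈ s, (((f : C₀(ℕ, ℝ)) n) • eB n) m
            = if m = n then (f : C₀(ℕ, ℝ)) n else 0 := by
          intro n _
          simp only [ZeroAtInftyContinuousMap.smul_apply, eB_apply, smul_eq_mul,
            mul_ite, mul_one, mul_zero]
        rw [Finset.sum_congr rfl this, Finset.sum_ite_eq s m (fun n => (f : C₀(ℕ, ℝ)) n)]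
        by_cases hm : m ∈ s
        · simp [hm]
        · simp only [hm, if_false]
          rw [hsdef] at hm
          replace hm := fun h => hm ((Set.Finite.mem_toFinset _).mpr h)
          exact Function.notMem_support.mp hm
      have hJf : J (f : C₀(ℕ, ℝ)) = ∑ n ∈ s, ((f : C₀(ℕ, ℝ)) n) • J (eB n) := by
        conv_lhs => rw [hfs]
        rw [map_sum]
        exact Finset.sum_congr rfl fun n _ => by rw [map_smul]
      have happ : (Jc + Dc) f = J (f : C₀(ℕ, ℝ)) + D f := rfl
      refine ⟨∑ n ∈ s, ((f : C₀(ℕ, ℝ)) n) • z n, ?_⟩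
      rw [map_sum, happ, hJf, hDval f, ← hsdef, ← Finset.sum_add_distrib]
      refine Finset.sum_congr rfl fun n _ => ?_
      rw [map_smul, ← smul_add, hddef]
      simp
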